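/- Fix T0 ∈ ℝ. Let q : ℝ → ℝ be antitone (nonincreasing) with q(t) > 0 for all t and let P : ℝ → ℝ be continuous with P(t) > 0 for all t. Then for all S, T with T0 < S ≤ T one has (∫_{T0}^S P(t) dt)·(∫_{T0}^T P(t)·q(t) dt) ≤ (∫_{T0}^T P(t) dt)·(∫_{T0}^S P(t)·q(t) dt); that is, the ratio A(T)/A^d(T) of the standardized risk-free annuity A(T) := ∫_{T0}^T P(t) dt to the defaultable standardized annuity A^d(T) := ∫_{T0}^T P(t)·q(t) dt is nondecreasing in T on (T0, ∞). -/
import Mathlib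


open MeasureTheory

/-- The ratio `A(T)/A^d(T)` of the standardized risk-free annuity
`A(T) = ∫_{T0}^T P` to the defaultable standardized annuity `A^d(T) = ∫_{T0}^T P·q`
is nondecreasing, in cross-multiplied form. -/
theorem stmt_5
    (T0 : ℝ) (q P : ℝ → ℝ)
    (hq : Antitone q) (hq0 : ∀ t, 0 < q t)
    (hP : Continuous P) (hP0 : ∀ t, 0 < P t) :
    ∀ S T : ℝ, T0 < S → S ≤ T →
      (∫ t in T0..S, P t) * (∫ t in T0..T, P t * q t) ≤
        (∫ t in T0..T, P t) * (∫ t in T0..S, P t * q t) := by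
  intro S T hT0S hST
  have hPint : ∀ a b : ℝ, IntervalIntegrable P volume a b := fun a b =>
    hP.intervalIntegrable a b
  have hPqint : ∀ a b : ℝ, IntervalIntegrable (fun t => P t * q t) volume a b := fun a b =>
    hq.intervalIntegrable.continuousOn_mul hP.continuousOn
  have hsplitP : (∫ t in T0..T, P t) = (∫ t in T0..S, P t) + ∫ t in S..T, P t :=
    (intervalIntegral.integral_add_adjacent_intervals (hPint T0 S) (hPint S T)).symm
  have hsplitPq : (∫ t in T0..T, P t * q t)
      = (∫ t in T0..S, P t * q t) + ∫ t in S..T, P t * q t :=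
    (intervalIntegral.integral_add_adjacent_intervals (hPqint T0 S) (hPqint S T)).symm
  set AS := ∫ t in T0..S, P t with hAS
  set AST := ∫ t in S..T, P t with hAST
  set BS := ∫ t in T0..S, P t * q t with hBS
  set BST := ∫ t in S..T, P t * q t with hBST
  have hASnn : 0 ≤ AS :=
    intervalIntegral.integral_nonneg hT0S.le (fun t _ => (hP0 t).le)
  have hASTnn : 0 ≤ AST :=
    intervalIntegral.integral_nonneg hST (fun t _ => (hP0 t).le)
  -- BST ≤ q S * AST
  have h1 : BST ≤ q S * AST := by
    have : BST ≤ ∫ t in S..T, q S * P t := by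
      apply intervalIntegral.integral_mono_on hST (hPqint S T)
      · exact (hPint S T).const_mul (q S)
      · intro t ht
        have := hq ht.1
        calc P t * q t ≤ P t * q S := mul_le_mul_of_nonneg_left this (hP0 t).le
          _ = q S * P t := mul_comm _ _
    simpa [intervalIntegral.integral_const_mul] using this
  -- q S * AS ≤ BS
  have h2 : q S * AS ≤ BS := by
    have : (∫ t in T0..S, q S * P t) ≤ BS := by
      apply intervalIntegral.integral_mono_on hT0S.le ((hPint T0 S).const_mul (q S))
        (hPqint T0 S)
      intro t ht
      have := hq ht.2
      calc q S * P t = P t * q S := mul_comm _ _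
        _ ≤ P t * q t := mul_le_mul_of_nonneg_left this (hP0 t).le
    simpa [intervalIntegral.integral_const_mul] using this
  rw [hsplitP, hsplitPq]
  nlinarith [mul_le_mul_of_nonneg_left h1 hASnn, mul_le_mul_of_nonneg_left h2 hASTnn]
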